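/- Let Y^(∞) = T⁽¹⁾ + ⋯ + T^(η) be a random sum of η i.i.d. copies of the total progeny T of a critical Galton-Watson process (independent of η). Then its generating function equals g(h(x)), where g is the generating function of η and h of T, and as x ↑ 1, 1 - g(h(x)) ~ (1-x)^{δ/(1+ν)} (L₃((1-x)^{-1}))^δ L₂((1-x)^{-1/(1+ν)} L₃((1-x)^{-1})^{-1}). -/

import Mathlib

open MeasureTheory Filter Asymptotics Set Real ProbabilityTheory
open scoped ENNReal

noncomputable section

def SlowlyVarying (L : ℝ → ℝ) : Prop :=
  ∀ lam : ℝ, 0 < lam → Filter.Tendsto (fun x => L (lam * x) / L x) Filter.atTop (nhds 1)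

def genFun {Ω : Type*} [MeasurableSpace Ω] (μ : Measure Ω) (X : Ω → ℕ) (x : ℝ) : ℝ :=
  ∑' n : ℕ, (μ {ω | X ω = n}).toReal * x ^ n

namespace Stmt12Aux

/-- A slowly varying function is eventually nonzero. -/
lemma sv_ne_zero (L : ℝ → ℝ) (hL : SlowlyVarying L) : ∀ᶠ y in atTop, L y ≠ 0 := by
  have h1 := hL 1 one_pos
  simp only [one_mul] at h1
  filter_upwards [h1.eventually_const_lt (show (0:ℝ) < 1 by norm_num)] with y hy
  intro h0
  rw [h0] at hy
  norm_num at hy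

lemma tendsto_one_div_sub : Tendsto (fun x : ℝ => 1/(1-x)) (nhdsWithin 1 (Iio 1)) atTop := by
  have h1 : Tendsto (fun x : ℝ => 1 - x) (nhdsWithin 1 (Iio 1)) (nhdsWithin 0 (Ioi 0)) := by
    rw [tendsto_nhdsWithin_iff]
    constructor
    · have hc : Continuous (fun x : ℝ => 1 - x) := by continuity
      have : Tendsto (fun x : ℝ => 1 - x) (nhds 1) (nhds 0) := by
        have := hc.tendsto (1:ℝ)
        simpa using this
      exact this.mono_left nhdsWithin_le_nhds
    · filter_upwards [eventually_mem_nhdsWithin] with x hx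
      simp only [mem_Iio] at hx
      simp only [mem_Ioi]
      linarith
  have := tendsto_inv_nhdsGT_zero.comp h1
  apply this.congr
  intro x
  simp [one_div]

lemma tendsto_phi : Tendsto (fun y : ℝ => 1 - 1/y) atTop (nhdsWithin 1 (Iio 1)) := by
  rw [tendsto_nhdsWithin_iff]
  constructor
  · have h2 : Tendsto (fun y : ℝ => 1/y) atTop (nhds 0) := by
      simpa [one_div] using tendsto_inv_atTop_zero (𝕜 := ℝ)
    have h3 : Tendsto (fun y : ℝ => 1 - 1/y) atTop (nhds (1 - 0)) :=
      Tendsto.sub (tendsto_const_nhds (x := (1:ℝ)) (f := atTop)) h2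
    simpa using h3
  · filter_upwards [eventually_gt_atTop (0:ℝ)] with y hy
    simp only [mem_Iio]
    have : 0 < 1/y := by positivity
    linarith

/-- Key estimate: if `L` is slowly varying, positive on a tail, and `y ↦ L y / y^δ` is
antitone on a tail, then `L (v x) / L (u x) → 1` whenever `u → ∞` and `v/u → 1`. -/
lemma slowly_varying_ratio (L : ℝ → ℝ) (hL : SlowlyVarying L) (δ : ℝ) (hδ : 0 < δ)
    (Y₀ : ℝ) (hY₀ : 1 ≤ Y₀) (hpos : ∀ y, Y₀ ≤ y → 0 < L y)
    (hmono : ∀ y z, Y₀ ≤ y → y ≤ z → L z * (z ^ δ)⁻¹ ≤ L y * (y ^ δ)⁻¹)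
    {lfil : Filter ℝ} (u v : ℝ → ℝ)
    (hu : Tendsto u lfil atTop) (huv : Tendsto (fun x => v x / u x) lfil (nhds 1)) :
    Tendsto (fun x => L (v x) / L (u x)) lfil (nhds 1) := by
  rw [Metric.tendsto_nhds]
  intro ε hε
  set ε' : ℝ := min ε (1/2) with hε'
  have hε'0 : 0 < ε' := lt_min hε one_half_pos
  have hε'1 : ε' < 1 := lt_of_le_of_lt (min_le_right _ _) (by norm_num)
  have hcont : Tendsto (fun l : ℝ => l ^ δ * l ^ δ) (nhdsWithin 1 (Ioi 1)) (nhds 1) := by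
    have h1 : ContinuousAt (fun l : ℝ => l ^ δ * l ^ δ) 1 := by
      have := (Real.continuousAt_rpow_const 1 δ (Or.inl one_ne_zero))
      exact this.mul this
    have := h1.tendsto
    rw [show ((1:ℝ) ^ δ * 1 ^ δ) = 1 by rw [Real.one_rpow]; ring] at this
    exact this.mono_left nhdsWithin_le_nhds
  have hmem : ∀ᶠ l : ℝ in nhdsWithin 1 (Ioi 1), l ^ δ * l ^ δ < min (1 + ε') (1 - ε')⁻¹ :=
    hcont.eventually_lt_const
      (lt_min (by linarith) (by rw [lt_inv_comm₀ one_pos (by linarith : (0:ℝ) < 1 - ε')]; norm_num [hε'0]))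
  obtain ⟨lam, hlamK, hlam1⟩ := (hmem.and (eventually_mem_nhdsWithin)).exists
  simp only [mem_setOf_eq, mem_Ioi] at hlamK hlam1
  set K : ℝ := lam ^ δ * lam ^ δ with hK
  have hlam0 : 0 < lam := lt_trans one_pos hlam1
  have hK1 : 1 ≤ K := by
    have h1 : (1:ℝ) ≤ lam ^ δ := Real.one_le_rpow hlam1.le hδ.le
    nlinarith
  have hKpos : 0 < K := lt_of_lt_of_le one_pos hK1
  have hKa : K < 1 + ε' := lt_of_lt_of_le hlamK (min_le_left _ _)
  have hKb : K * (1 - ε') < 1 := by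
    have := lt_of_lt_of_le hlamK (min_le_right _ _)
    rw [lt_inv_comm₀ (by positivity) (by linarith)] at this
    nlinarith [this]
  have ev1 : ∀ᶠ x in lfil, lam * Y₀ ≤ u x := hu.eventually (eventually_ge_atTop _)
  have ev2 : ∀ᶠ x in lfil, lam⁻¹ < v x / u x ∧ v x / u x < lam := by
    have h1 : (lam : ℝ)⁻¹ < 1 := inv_lt_one_of_one_lt₀ hlam1
    have := huv.eventually (eventually_mem_set.mpr (Ioo_mem_nhds h1 hlam1))
    filter_upwards [this] with x hx using ⟨hx.1, hx.2⟩
  have ev3 : ∀ᶠ x in lfil, L (lam⁻¹ * u x) / L (u x) < (1 + ε') / K :=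
    ((hL lam⁻¹ (by positivity)).comp hu).eventually_lt_const
      (by rw [lt_div_iff₀ hKpos]; nlinarith)
  have ev4 : ∀ᶠ x in lfil, (1 - ε') * K < L (lam * u x) / L (u x) :=
    ((hL lam hlam0).comp hu).eventually_const_lt (by nlinarith)
  filter_upwards [ev1, ev2, ev3, ev4] with x h1 ⟨h2a, h2b⟩ h3 h4
  set U := u x with hU
  set V := v x with hV
  have hU0 : 0 < U := by nlinarith
  have hUY : Y₀ ≤ U := by nlinarith
  have hUlamY : Y₀ ≤ lam⁻¹ * U := by
    calc Y₀ = lam⁻¹ * (lam * Y₀) := by field_simp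
      _ ≤ lam⁻¹ * U := mul_le_mul_of_nonneg_left h1 (inv_pos.mpr hlam0).le
  have hVlow : lam⁻¹ * U < V := (lt_div_iff₀ hU0).mp h2a
  have hVhigh : V < lam * U := (div_lt_iff₀ hU0).mp h2b
  have hVY : Y₀ ≤ V := hUlamY.trans hVlow.le
  have hV0 : 0 < V := lt_of_lt_of_le (by linarith) hVY
  have hlamUY : Y₀ ≤ lam * U := by nlinarith
  have hA : 0 < L U := hpos U hUY
  have hB : 0 < L V := hpos V hVY
  have hC : 0 < L (lam⁻¹ * U) := hpos _ hUlamY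
  have hD : 0 < L (lam * U) := hpos _ hlamUY
  have hUd : 0 < U ^ δ := Real.rpow_pos_of_pos hU0 δ
  have hVd : 0 < V ^ δ := Real.rpow_pos_of_pos hV0 δ
  have hld : 0 < lam ^ δ := Real.rpow_pos_of_pos hlam0 δ
  have hKey1 : ((lam⁻¹ * U) ^ δ)⁻¹ * (lam * U) ^ δ = K := by
    rw [Real.mul_rpow (inv_nonneg.mpr hlam0.le) hU0.le,
      Real.mul_rpow hlam0.le hU0.le, Real.inv_rpow hlam0.le, hK]
    field_simp
  have hup : L V ≤ L (lam⁻¹ * U) * K := by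
    have hm := hmono (lam⁻¹ * U) V hUlamY hVlow.le
    have h5 : L V = L V * (V ^ δ)⁻¹ * V ^ δ := by field_simp
    calc L V = L V * (V ^ δ)⁻¹ * V ^ δ := h5
      _ ≤ L (lam⁻¹ * U) * (((lam⁻¹ * U) ^ δ)⁻¹) * V ^ δ :=
          mul_le_mul_of_nonneg_right hm hVd.le
      _ ≤ L (lam⁻¹ * U) * (((lam⁻¹ * U) ^ δ)⁻¹) * (lam * U) ^ δ := by
          apply mul_le_mul_of_nonneg_left
            (Real.rpow_le_rpow hV0.le hVhigh.le hδ.le)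
          positivity
      _ = L (lam⁻¹ * U) * K := by rw [mul_assoc, hKey1]
  have hlow : L (lam * U) * K⁻¹ ≤ L V := by
    have hm := hmono V (lam * U) hVY hVhigh.le
    have hKey2 : ((lam * U) ^ δ)⁻¹ * (lam⁻¹ * U) ^ δ = K⁻¹ := by
      rw [Real.mul_rpow (inv_nonneg.mpr hlam0.le) hU0.le,
        Real.mul_rpow hlam0.le hU0.le, Real.inv_rpow hlam0.le, hK]
      field_simp
    calc L (lam * U) * K⁻¹ = L (lam * U) * (((lam * U) ^ δ)⁻¹) * (lam⁻¹ * U) ^ δ := by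
          rw [mul_assoc, hKey2]
      _ ≤ L (lam * U) * (((lam * U) ^ δ)⁻¹) * V ^ δ := by
          apply mul_le_mul_of_nonneg_left
            (Real.rpow_le_rpow (by positivity) hVlow.le hδ.le)
          positivity
      _ ≤ L V * (V ^ δ)⁻¹ * V ^ δ := mul_le_mul_of_nonneg_right hm hVd.le
      _ = L V := by field_simp
  have hub : L V / L U < 1 + ε' := by
    have h6 : L (lam⁻¹ * U) * K < (1 + ε') * L U := (div_lt_div_iff₀ hA hKpos).mp h3
    rw [div_lt_iff₀ hA]
    linarith
  have hlb : 1 - ε' < L V / L U := by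
    have h4' : ((1 - ε') * K) * L U < L (lam * U) := (lt_div_iff₀ hA).mp h4
    have h7 : (1 - ε') * L U < L (lam * U) * K⁻¹ := by
      rw [← div_eq_mul_inv, lt_div_iff₀ hKpos,
        show (1 - ε') * L U * K = ((1 - ε') * K) * L U from by ring]
      exact h4'
    rw [lt_div_iff₀ hA]
    linarith
  rw [Real.dist_eq, abs_lt]
  constructor
  · have h8 : ε' ≤ ε := min_le_left _ _
    linarith
  · have h8 : ε' ≤ ε := min_le_left _ _
    linarith

variable {Ω : Type*} [MeasurableSpace Ω] (μ : Measure Ω) [IsProbabilityMeasure μ]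

lemma tsum_meas_eq_one {X : Ω → ℕ} (hX : Measurable X) :
    ∑' n : ℕ, μ {ω | X ω = n} = 1 := by
  have h1 : ∀ n : ℕ, {ω | X ω = n} = X ⁻¹' {n} := fun n => rfl
  simp_rw [h1]
  rw [← measure_iUnion (fun i j hij => Disjoint.preimage X (by simpa using hij))
      (fun n => hX (measurableSet_singleton n))]
  rw [← preimage_iUnion]
  have : ⋃ i : ℕ, ({i} : Set ℕ) = univ := by ext n; simp
  rw [this]; simp

omit [IsProbabilityMeasure μ] in
lemma lintegral_pow_eq (t : ℝ≥0∞) {X : Ω → ℕ} (hX : Measurable X) :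
    ∫⁻ ω, t ^ X ω ∂μ = ∑' n : ℕ, μ {ω | X ω = n} * t ^ n := by
  have : ∫⁻ ω, t ^ X ω ∂μ = ∫⁻ n, t ^ n ∂(μ.map X) :=
    (lintegral_map (f := fun n : ℕ => t ^ n) (by measurability) hX).symm
  rw [this, lintegral_countable' (fun n : ℕ => t ^ n)]
  congr 1; ext n
  rw [Measure.map_apply hX (measurableSet_singleton n), mul_comm]
  rfl

lemma summable_p {X : Ω → ℕ} (hX : Measurable X) :
    Summable (fun n : ℕ => (μ {ω | X ω = n}).toReal) := by
  apply ENNReal.summable_toReal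
  rw [tsum_meas_eq_one μ hX]; exact ENNReal.one_ne_top

lemma tsum_p_eq_one {X : Ω → ℕ} (hX : Measurable X) :
    ∑' n : ℕ, (μ {ω | X ω = n}).toReal = 1 := by
  rw [← ENNReal.tsum_toReal_eq (fun n => measure_ne_top μ _), tsum_meas_eq_one μ hX]
  rfl

lemma summable_genFun {X : Ω → ℕ} (hX : Measurable X) {x : ℝ} (hx0 : 0 ≤ x) (hx1 : x ≤ 1) :
    Summable (fun n : ℕ => (μ {ω | X ω = n}).toReal * x ^ n) := by
  apply Summable.of_nonneg_of_le (fun n => by positivity)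
    (fun n => ?_) (summable_p μ hX)
  calc (μ {ω | X ω = n}).toReal * x ^ n ≤ (μ {ω | X ω = n}).toReal * 1 := by
        apply mul_le_mul_of_nonneg_left (pow_le_one₀ hx0 hx1) ENNReal.toReal_nonneg
    _ = _ := mul_one _

omit [IsProbabilityMeasure μ] in
lemma genFun_nonneg {X : Ω → ℕ} {x : ℝ} (hx0 : 0 ≤ x) : 0 ≤ genFun μ X x :=
  tsum_nonneg (fun n => by positivity)

lemma genFun_le_one {X : Ω → ℕ} (hX : Measurable X) {x : ℝ} (hx0 : 0 ≤ x) (hx1 : x ≤ 1) :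
    genFun μ X x ≤ 1 := by
  rw [← tsum_p_eq_one μ hX]
  apply Summable.tsum_le_tsum _ (summable_genFun μ hX hx0 hx1) (summable_p μ hX)
  intro n
  calc (μ {ω | X ω = n}).toReal * x ^ n ≤ (μ {ω | X ω = n}).toReal * 1 :=
        mul_le_mul_of_nonneg_left (pow_le_one₀ hx0 hx1) ENNReal.toReal_nonneg
    _ = _ := mul_one _

lemma genFun_mono {X : Ω → ℕ} (hX : Measurable X) {x y : ℝ} (hx0 : 0 ≤ x) (hxy : x ≤ y)
    (hy1 : y ≤ 1) : genFun μ X x ≤ genFun μ X y := by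
  apply Summable.tsum_le_tsum _ (summable_genFun μ hX hx0 (hxy.trans hy1))
    (summable_genFun μ hX (hx0.trans hxy) hy1)
  intro n
  exact mul_le_mul_of_nonneg_left (pow_le_pow_left₀ hx0 hxy n) ENNReal.toReal_nonneg

lemma genFun_lt_one {X : Ω → ℕ} (hX : Measurable X) {x : ℝ} (hx0 : 0 ≤ x) (hx1 : x < 1)
    {n₀ : ℕ} (hn₀ : n₀ ≠ 0) (hp : μ {ω | X ω = n₀} ≠ 0) : genFun μ X x < 1 := by
  rw [← tsum_p_eq_one μ hX]
  have hle : ∀ n : ℕ, (μ {ω | X ω = n}).toReal * x ^ n ≤ (μ {ω | X ω = n}).toReal := by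
    intro n
    calc (μ {ω | X ω = n}).toReal * x ^ n ≤ (μ {ω | X ω = n}).toReal * 1 :=
        mul_le_mul_of_nonneg_left (pow_le_one₀ hx0 hx1.le) ENNReal.toReal_nonneg
      _ = _ := mul_one _
  have hplt : 0 < (μ {ω | X ω = n₀}).toReal :=
    ENNReal.toReal_pos hp (measure_ne_top μ _)
  have hi : (μ {ω | X ω = n₀}).toReal * x ^ n₀ < (μ {ω | X ω = n₀}).toReal :=
    calc (μ {ω | X ω = n₀}).toReal * x ^ n₀ < (μ {ω | X ω = n₀}).toReal * 1 :=
        mul_lt_mul_of_pos_left (pow_lt_one₀ hx0 hx1 hn₀) hplt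
      _ = _ := mul_one _
  exact Summable.tsum_lt_tsum hle hi (summable_genFun μ hX hx0 hx1.le) (summable_p μ hX)

lemma ofReal_genFun {X : Ω → ℕ} (hX : Measurable X) {x : ℝ} (hx0 : 0 ≤ x) (hx1 : x ≤ 1) :
    ENNReal.ofReal (genFun μ X x) = ∑' n : ℕ, μ {ω | X ω = n} * (ENNReal.ofReal x) ^ n := by
  rw [genFun, ENNReal.ofReal_tsum_of_nonneg (fun n => by positivity)
      (summable_genFun μ hX hx0 hx1)]
  congr 1; ext n
  rw [ENNReal.ofReal_mul ENNReal.toReal_nonneg, ENNReal.ofReal_toReal (measure_ne_top μ _),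
    ← ENNReal.ofReal_pow hx0]

theorem part1
    (T : ℕ → Ω → ℕ) (η : Ω → ℕ) (hmeasT : ∀ m, Measurable (T m)) (hmeasη : Measurable η)
    (hindep : iIndepFun
        (fun o : Option ℕ => Option.elim o η fun m => T m) μ)
    (hidentT : ∀ m, Measure.map (T m) μ = Measure.map (T 0) μ)
    (Y : Ω → ℕ) (hY : ∀ ω, Y ω = ∑ m ∈ Finset.range (η ω), T m ω)
    {x : ℝ} (hx0 : 0 ≤ x) (hx1 : x ≤ 1) :
    genFun μ Y x = genFun μ η (genFun μ (T 0) x) := by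
  classical
  set F : Option ℕ → Ω → ℕ := fun o => Option.elim o η fun m => T m with hF
  have hFmeas : ∀ o, Measurable (F o) := by rintro (_ | m); exacts [hmeasη, hmeasT m]
  set S : ℕ → Ω → ℕ := fun n ω => ∑ m ∈ Finset.range n, T m ω with hS
  have hSmeas : ∀ n, Measurable (S n) := fun n =>
    Finset.measurable_sum _ (fun i _ => hmeasT i)
  have hsum_eq : ∀ n : ℕ,
      (∑ j ∈ (Finset.range n).map ⟨some, Option.some_injective ℕ⟩, F j) = S n := by
    intro n; funext ω
    simp [Finset.sum_apply, Finset.sum_map, hF, hS]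
  have hindepSη : ∀ n, IndepFun (S n) η μ := by
    intro n
    have hnm : (none : Option ℕ) ∉ (Finset.range n).map ⟨some, Option.some_injective ℕ⟩ := by
      simp
    have := hindep.indepFun_finsetSum_of_notMem hFmeas hnm
    rwa [hsum_eq n] at this
  have hindepST : ∀ n, IndepFun (S n) (T n) μ := by
    intro n
    have hnm : (some n : Option ℕ) ∉ (Finset.range n).map ⟨some, Option.some_injective ℕ⟩ := by
      simp
    have := hindep.indepFun_finsetSum_of_notMem hFmeas hnm
    rwa [hsum_eq n] at this
  have hYset : ∀ k : ℕ, {ω | Y ω = k} = ⋃ n, ({ω | η ω = n} ∩ {ω | S n ω = k}) := by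
    intro k; ext ω
    simp only [mem_setOf_eq, mem_iUnion, mem_inter_iff]
    constructor
    · intro hk; exact ⟨η ω, rfl, by rw [← hk, hY ω]⟩
    · rintro ⟨n, h1, h2⟩; rw [hY ω, h1]; exact h2
  have hmeasY : Measurable Y := by
    apply measurable_to_countable'
    intro k
    have : Y ⁻¹' {k} = {ω | Y ω = k} := rfl
    rw [this, hYset k]
    exact MeasurableSet.iUnion fun n =>
      ((hmeasη (measurableSet_singleton n)).inter (hSmeas n (measurableSet_singleton k)))
  set t : ℝ≥0∞ := ENNReal.ofReal x with ht
  have hTn : ∀ n k : ℕ, μ {ω | T n ω = k} = μ {ω | T 0 ω = k} := by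
    intro n k
    have h1 : {ω | T n ω = k} = T n ⁻¹' {k} := rfl
    have h2 : {ω | T 0 ω = k} = T 0 ⁻¹' {k} := rfl
    rw [h1, h2, ← Measure.map_apply (hmeasT n) (measurableSet_singleton k),
      ← Measure.map_apply (hmeasT 0) (measurableSet_singleton k), hidentT n]
  have hGS : ∀ n : ℕ, (∑' k : ℕ, μ {ω | S n ω = k} * t ^ k)
      = (∑' k : ℕ, μ {ω | T 0 ω = k} * t ^ k) ^ n := by
    intro n
    induction n with
    | zero =>
      rw [pow_zero, ← lintegral_pow_eq μ t (hSmeas 0)]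
      have : ∀ ω, t ^ S 0 ω = 1 := by intro ω; simp [hS]
      simp only [this, lintegral_one, measure_univ]
    | succ n ih =>
      have hadd : ∀ ω, S (n+1) ω = S n ω + T n ω := by
        intro ω; simp [hS, Finset.sum_range_succ]
      have hmt : Measurable (fun m : ℕ => t ^ m) := by measurability
      have hind : IndepFun (fun ω => t ^ S n ω) (fun ω => t ^ T n ω) μ :=
        (hindepST n).comp hmt hmt
      calc (∑' k : ℕ, μ {ω | S (n+1) ω = k} * t ^ k)
          = ∫⁻ ω, t ^ S (n+1) ω ∂μ := (lintegral_pow_eq μ t (hSmeas (n+1))).symm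
        _ = ∫⁻ ω, ((fun ω => t ^ S n ω) * fun ω => t ^ T n ω) ω ∂μ := by
            congr 1; funext ω; simp [hadd ω, pow_add]
        _ = (∫⁻ ω, t ^ S n ω ∂μ) * ∫⁻ ω, t ^ T n ω ∂μ :=
            lintegral_mul_eq_lintegral_mul_lintegral_of_indepFun
              (hmt.comp (hSmeas n)) (hmt.comp (hmeasT n)) hind
        _ = (∑' k : ℕ, μ {ω | S n ω = k} * t ^ k) * (∑' k : ℕ, μ {ω | T n ω = k} * t ^ k) := by
            rw [lintegral_pow_eq μ t (hSmeas n), lintegral_pow_eq μ t (hmeasT n)]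
        _ = _ := by
            simp_rw [hTn n]
            rw [ih, pow_succ]
  have hmuY : ∀ k : ℕ, μ {ω | Y ω = k} = ∑' n : ℕ, μ {ω | η ω = n} * μ {ω | S n ω = k} := by
    intro k
    have hdis : Pairwise (Function.onFun Disjoint
        (fun n => {ω | η ω = n} ∩ {ω | S n ω = k})) := by
      intro i j hij
      simp only [Function.onFun, disjoint_iff_inter_eq_empty]
      ext ω
      simp only [mem_inter_iff, mem_setOf_eq, mem_empty_iff_false, iff_false]
      rintro ⟨⟨h1, -⟩, ⟨h2, -⟩⟩
      exact hij (h1 ▸ h2 ▸ rfl)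
    have hms : ∀ n : ℕ, MeasurableSet ({ω | η ω = n} ∩ {ω | S n ω = k}) := fun n =>
      (hmeasη (measurableSet_singleton n)).inter (hSmeas n (measurableSet_singleton k))
    rw [hYset k, measure_iUnion hdis hms]
    congr 1; funext n
    exact (hindepSη n).symm.measure_inter_preimage_eq_mul {n} {k}
      (measurableSet_singleton n) (measurableSet_singleton k)
  have hH0 : 0 ≤ genFun μ (T 0) x := genFun_nonneg μ hx0
  have hH1 : genFun μ (T 0) x ≤ 1 := genFun_le_one μ (hmeasT 0) hx0 hx1
  have key : ENNReal.ofReal (genFun μ Y x) = ENNReal.ofReal (genFun μ η (genFun μ (T 0) x)) := by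
    rw [ofReal_genFun μ hmeasY hx0 hx1, ofReal_genFun μ hmeasη hH0 hH1]
    calc ∑' k : ℕ, μ {ω | Y ω = k} * t ^ k
        = ∑' k : ℕ, ∑' n : ℕ, μ {ω | η ω = n} * μ {ω | S n ω = k} * t ^ k := by
          simp_rw [hmuY]
          congr 1; funext k
          rw [ENNReal.tsum_mul_right]
      _ = ∑' n : ℕ, ∑' k : ℕ, μ {ω | η ω = n} * μ {ω | S n ω = k} * t ^ k :=
          ENNReal.tsum_comm
      _ = ∑' n : ℕ, μ {ω | η ω = n} * (∑' k : ℕ, μ {ω | S n ω = k} * t ^ k) := by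
          congr 1; funext n
          rw [← ENNReal.tsum_mul_left]
          congr 1; funext k; ring
      _ = ∑' n : ℕ, μ {ω | η ω = n} * (ENNReal.ofReal (genFun μ (T 0) x)) ^ n := by
          congr 1; funext n
          rw [hGS n, ← ofReal_genFun μ (hmeasT 0) hx0 hx1]
  exact (ENNReal.ofReal_eq_ofReal_iff (genFun_nonneg μ hx0) (genFun_nonneg μ hH0)).mp key

end Stmt12Aux

open Stmt12Aux

theorem stmt12 {Ω : Type*} [MeasurableSpace Ω] (μ : Measure Ω) [IsProbabilityMeasure μ]
    (ν δ : ℝ) (hν0 : 0 ≤ ν) (hν1 : ν < 1) (hδ0 : 0 < δ) (hδ1 : δ < 1)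
    (L₂ L₃ : ℝ → ℝ) (hL₂ : SlowlyVarying L₂) (hL₃ : SlowlyVarying L₃)
    (T : ℕ → Ω → ℕ) (η : Ω → ℕ) (hmeasT : ∀ m, Measurable (T m)) (hmeasη : Measurable η)
    (hindep : iIndepFun
        (fun o : Option ℕ => Option.elim o η fun m => T m) μ)
    (hidentT : ∀ m, Measure.map (T m) μ = Measure.map (T 0) μ)
    (g h : ℝ → ℝ)
    (hg : ∀ x ∈ Ico (0:ℝ) 1, g x = 1 - (1 - x) ^ δ * L₂ (1 / (1 - x)))
    (hggen : ∀ x ∈ Ico (0:ℝ) 1, genFun μ η x = g x)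
    (hhgen : ∀ x ∈ Ico (0:ℝ) 1, genFun μ (T 0) x = h x)
    (hh : (fun x => 1 - h x) ~[nhdsWithin 1 (Set.Iio 1)]
        fun x => (1 - x) ^ (1 / (1 + ν)) * L₃ (1 / (1 - x)))
    (Y : Ω → ℕ) (hY : ∀ ω, Y ω = ∑ m ∈ Finset.range (η ω), T m ω) :
    (∀ x ∈ Ico (0:ℝ) 1, genFun μ Y x = g (h x)) ∧
    (fun x => 1 - g (h x)) ~[nhdsWithin 1 (Set.Iio 1)]
      fun x => (1 - x) ^ (δ / (1 + ν)) * (L₃ (1 / (1 - x))) ^ δ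
        * L₂ ((1 - x) ^ (-(1 / (1 + ν))) * (L₃ (1 / (1 - x)))⁻¹) := by
  have hν : (0:ℝ) < 1 + ν := by linarith
  set α : ℝ := 1 / (1 + ν) with hα
  have hα0 : 0 < α := by positivity
  set lfil := nhdsWithin (1:ℝ) (Iio 1) with hlfil
  set B : ℝ → ℝ := fun x => (1 - x) ^ α * L₃ (1 / (1 - x)) with hB
  have hIoo : Ioo (0:ℝ) 1 ∈ lfil := Ioo_mem_nhdsLT_of_mem ⟨one_pos, le_refl 1⟩
  have hL₃ne := sv_ne_zero L₃ hL₃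
  have hL₂ne := sv_ne_zero L₂ hL₂
  have h1div : Tendsto (fun x : ℝ => 1/(1-x)) lfil atTop := tendsto_one_div_sub
  have hbne : ∀ᶠ x in lfil, B x ≠ 0 := by
    filter_upwards [h1div.eventually hL₃ne, hIoo] with x h1 h2
    have h1x : 0 < 1 - x := by simp only [mem_Ioo] at h2; linarith [h2.2]
    have : 0 < (1 - x) ^ α := Real.rpow_pos_of_pos h1x α
    simp only [hB]
    exact mul_ne_zero this.ne' h1
  have hab : Tendsto (fun x => (1 - h x) / B x) lfil (nhds 1) := by
    have := (isEquivalent_iff_tendsto_one hbne).mp hh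
    exact this
  -- nondegeneracy of T 0
  have hnd : ∃ n : ℕ, n ≠ 0 ∧ μ {ω | T 0 ω = n} ≠ 0 := by
    by_contra hcon
    push_neg at hcon
    have hT1 : ∀ x ∈ Ico (0:ℝ) 1, h x = 1 := by
      intro x hx
      rw [← hhgen x hx, genFun, tsum_eq_single 0 (fun n hn => by rw [hcon n hn]; simp)]
      have hp0 : (μ {ω | T 0 ω = 0}).toReal = 1 := by
        have h1 := tsum_p_eq_one μ (hmeasT 0)
        rwa [tsum_eq_single 0 (fun n hn => by rw [hcon n hn]; simp)] at h1
      simp [hp0]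
    have hev : (fun x => 1 - h x) =ᶠ[lfil] (fun _ => (0:ℝ)) := by
      filter_upwards [hIoo] with x hx
      simp only [mem_Ioo] at hx
      rw [hT1 x ⟨hx.1.le, hx.2⟩]; ring
    have hBzero : B =ᶠ[lfil] (fun _ => (0:ℝ)) := by
      have h1 : (fun x => 1 - h x) ~[lfil] (0 : ℝ → ℝ) :=
        isEquivalent_zero_iff_eventually_zero.mpr hev
      have h2 : B ~[lfil] (0 : ℝ → ℝ) := (hh.symm.trans h1)
      exact isEquivalent_zero_iff_eventually_zero.mp h2
    obtain ⟨x, hx1, hx2⟩ := (hBzero.and hbne).exists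
    exact hx2 hx1
  have hhval : ∀ x, x ∈ Ico (0:ℝ) 1 → 0 ≤ h x ∧ h x < 1 := by
    intro x hx
    obtain ⟨n₀, hn₀, hp⟩ := hnd
    rw [← hhgen x hx]
    exact ⟨genFun_nonneg μ hx.1, genFun_lt_one μ (hmeasT 0) hx.1 hx.2 hn₀ hp⟩
  -- Part 1
  have hpart1 : ∀ x ∈ Ico (0:ℝ) 1, genFun μ Y x = g (h x) := by
    intro x hx
    rw [part1 μ T η hmeasT hmeasη hindep hidentT Y hY hx.1 hx.2.le, hhgen x hx]
    exact hggen (h x) ⟨(hhval x hx).1, (hhval x hx).2.le.lt_of_ne (ne_of_lt (hhval x hx).2)⟩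
  refine ⟨hpart1, ?_⟩
  -- Part 2
  have hmonoh : ∀ x y, x ∈ Ico (0:ℝ) 1 → y ∈ Ico (0:ℝ) 1 → x ≤ y → h x ≤ h y := by
    intro x y hx hy hxy
    rw [← hhgen x hx, ← hhgen y hy]
    exact genFun_mono μ (hmeasT 0) hx.1 hxy hy.2.le
  have himg : (h '' Ico 0 1).Nonempty :=
    ⟨h 0, mem_image_of_mem h ⟨le_refl 0, one_pos⟩⟩
  have hbdd : BddAbove (h '' Ico 0 1) := by
    refine ⟨1, ?_⟩
    rintro y ⟨x, hx, rfl⟩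
    exact (hhval x hx).2.le
  set s := sSup (h '' Ico 0 1) with hs
  have hs_le : s ≤ 1 := csSup_le himg (by rintro y ⟨x, hx, rfl⟩; exact (hhval x hx).2.le)
  have htends : Tendsto h lfil (nhds s) := by
    rw [tendsto_order]
    constructor
    · intro c hc
      obtain ⟨yv, ⟨x₀, hx₀, rfl⟩, hcy⟩ := exists_lt_of_lt_csSup himg hc
      have hIoo2 : Ioo x₀ 1 ∈ lfil := Ioo_mem_nhdsLT_of_mem ⟨hx₀.2, le_refl 1⟩
      filter_upwards [hIoo2] with x hx
      simp only [mem_Ioo] at hx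
      exact lt_of_lt_of_le hcy
        (hmonoh x₀ x hx₀ ⟨hx₀.1.trans hx.1.le, hx.2⟩ hx.1.le)
    · intro c hc
      filter_upwards [hIoo] with x hx
      simp only [mem_Ioo] at hx
      exact lt_of_le_of_lt (le_csSup hbdd (mem_image_of_mem h ⟨hx.1.le, hx.2⟩)) hc
  have hs1 : s = 1 := by
    by_contra hsne
    have hslt : s < 1 := lt_of_le_of_ne hs_le hsne
    have hc0 : (0:ℝ) < 1 - s := by linarith
    have ha_lim : Tendsto (fun x => 1 - h x) lfil (nhds (1 - s)) :=
      tendsto_const_nhds.sub htends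
    have hb_lim : Tendsto B lfil (nhds (1 - s)) := hh.tendsto_nhds ha_lim
    have hφ : Tendsto (fun y : ℝ => 1 - 1/y) atTop lfil := tendsto_phi
    have hlam2 : Tendsto (fun y : ℝ => 2*y) atTop atTop := tendsto_id.const_mul_atTop two_pos
    have h2y : Tendsto (fun y : ℝ => B (1 - 1/(2*y))) atTop (nhds (1 - s)) :=
      hb_lim.comp (hφ.comp hlam2)
    have h1y : Tendsto (fun y : ℝ => B (1 - 1/y)) atTop (nhds (1 - s)) := hb_lim.comp hφ
    have hid : ∀ z : ℝ, 1 ≤ z → B (1 - 1/z) = (1/z) ^ α * L₃ z := by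
      intro z hz
      have hz0 : (0:ℝ) < z := lt_of_lt_of_le one_pos hz
      have e1 : 1 - (1 - 1/z) = 1/z := by ring
      have e2 : 1/(1 - (1 - 1/z)) = z := by rw [e1]; exact one_div_one_div z
      simp only [hB]
      rw [e2, e1]
    have hrat : Tendsto (fun y : ℝ => L₃ (2*y)/L₃ y) atTop (nhds ((1-s)/(1-s) * 2 ^ α)) := by
      apply Tendsto.congr' ?_ ((h2y.div h1y hc0.ne').mul tendsto_const_nhds)
      filter_upwards [eventually_ge_atTop (1:ℝ), h1y.eventually_const_lt hc0] with y hy1 hyB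
      have hy0 : (0:ℝ) < y := lt_of_lt_of_le one_pos hy1
      have h2y1 : (1:ℝ) ≤ 2*y := by linarith
      have hL3y : L₃ y ≠ 0 := by
        intro h0
        rw [hid y hy1, h0, mul_zero] at hyB
        linarith
      simp only [Pi.div_apply]
      rw [hid y hy1, hid (2*y) h2y1]
      have e3 : (1/(2*y)) = (1/2) * (1/y) := by field_simp
      have e4 : ((1/2 : ℝ) * (1/y)) ^ α = (1/2 : ℝ) ^ α * (1/y) ^ α :=
        Real.mul_rpow (by norm_num) (by positivity)
      have e5 : (1/2 : ℝ) ^ α * 2 ^ α = 1 := by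
        rw [← Real.mul_rpow (by norm_num) (by norm_num)]
        norm_num
      have hyα : (0:ℝ) < (1/y) ^ α := Real.rpow_pos_of_pos (by positivity) α
      rw [e3, e4]
      calc (1/2:ℝ) ^ α * (1/y) ^ α * L₃ (2*y) / ((1/y) ^ α * L₃ y) * 2 ^ α
          = ((1/2:ℝ) ^ α * 2 ^ α) * ((1/y) ^ α * L₃ (2*y) / ((1/y) ^ α * L₃ y)) := by
            ring
        _ = L₃ (2*y) / L₃ y := by
            rw [e5, one_mul, mul_div_mul_left _ _ hyα.ne']
    have huniq := tendsto_nhds_unique (hL₃ 2 two_pos) hrat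
    rw [div_self hc0.ne', one_mul] at huniq
    have h2α : (1:ℝ) < 2 ^ α := by
      rw [Real.one_lt_rpow_iff_of_pos two_pos]
      left; exact ⟨one_lt_two, hα0⟩
    linarith [huniq, h2α]
  rw [hs1] at htends
  have ha0 : Tendsto (fun x => 1 - h x) lfil (nhds 0) := by
    have := tendsto_const_nhds.sub htends (f := fun _ : ℝ => (1:ℝ))
    simpa using this
  have ha_pos : ∀ᶠ x in lfil, 0 < 1 - h x := by
    filter_upwards [hIoo] with x hx
    simp only [mem_Ioo] at hx
    have := (hhval x ⟨hx.1.le, hx.2⟩).2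
    linarith
  have hb_pos : ∀ᶠ x in lfil, 0 < B x := by
    filter_upwards [hab.eventually_const_lt (show (0:ℝ) < 1 by norm_num), ha_pos]
      with x h1 h2
    rcases div_pos_iff.mp h1 with ⟨-, hb⟩ | ⟨hn, -⟩
    · exact hb
    · linarith
  have hv_top : Tendsto (fun x => (1 - h x)⁻¹) lfil atTop := by
    apply tendsto_inv_nhdsGT_zero.comp
    rw [tendsto_nhdsWithin_iff]
    exact ⟨ha0, ha_pos.mono (fun x hx => hx)⟩
  have hb0 : Tendsto B lfil (nhds 0) := hh.tendsto_nhds ha0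
  have hu_top : Tendsto (fun x => (B x)⁻¹) lfil atTop := by
    apply tendsto_inv_nhdsGT_zero.comp
    rw [tendsto_nhdsWithin_iff]
    exact ⟨hb0, hb_pos.mono (fun x hx => hx)⟩
  have huv : Tendsto (fun x => (1 - h x)⁻¹ / (B x)⁻¹) lfil (nhds 1) := by
    have h1 : Tendsto (fun x => ((1 - h x) / B x)⁻¹) lfil (nhds 1) := by
      have := hab.inv₀ one_ne_zero
      simpa using this
    apply h1.congr
    intro x
    rw [inv_div, ← inv_div_inv]
  -- the antitone structure of L₂
  obtain ⟨Y₁, hY₁⟩ := eventually_atTop.mp hL₂ne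
  set Y₀ := max Y₁ 1 with hY₀def
  have hgle1 : ∀ x ∈ Ico (0:ℝ) 1, g x ≤ 1 := by
    intro x hx
    rw [← hggen x hx]
    exact genFun_le_one μ hmeasη hx.1 hx.2.le
  have hmem_y : ∀ y : ℝ, 1 ≤ y → 1 - 1/y ∈ Ico (0:ℝ) 1 := by
    intro y hy
    have hy0 : (0:ℝ) < y := lt_of_lt_of_le one_pos hy
    constructor
    · have : 1/y ≤ 1 := by rw [div_le_one hy0]; exact hy
      linarith
    · have : 0 < 1/y := by positivity
      linarith
  have hL₂eq : ∀ y : ℝ, 1 ≤ y → L₂ y = (1 - g (1 - 1/y)) * y ^ δ := by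
    intro y hy
    have hy0 : (0:ℝ) < y := lt_of_lt_of_le one_pos hy
    have hx := hmem_y y hy
    have hgy := hg _ hx
    have e1 : 1 - (1 - 1/y) = 1/y := by ring
    have e2 : 1/(1 - (1 - 1/y)) = y := by rw [e1]; exact one_div_one_div y
    rw [e2, e1] at hgy
    have e3 : ((1:ℝ)/y) ^ δ = (y ^ δ)⁻¹ := by
      rw [one_div, Real.inv_rpow hy0.le]
    have e4 : (0:ℝ) < y ^ δ := Real.rpow_pos_of_pos hy0 δ
    rw [e3] at hgy
    have e5 : (y ^ δ)⁻¹ * L₂ y = 1 - g (1 - 1/y) := by linarith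
    calc L₂ y = ((y ^ δ)⁻¹ * L₂ y) * y ^ δ := by field_simp
      _ = (1 - g (1 - 1/y)) * y ^ δ := by rw [e5]
  have hposL₂ : ∀ y, Y₀ ≤ y → 0 < L₂ y := by
    intro y hy
    have hy1 : 1 ≤ y := le_trans (le_max_right _ _) hy
    have hne := hY₁ y (le_trans (le_max_left _ _) hy)
    have heq := hL₂eq y hy1
    have hnonneg : 0 ≤ L₂ y := by
      rw [heq]
      apply mul_nonneg _ (Real.rpow_nonneg (by linarith) δ)
      have := hgle1 _ (hmem_y y hy1)
      linarith
    exact lt_of_le_of_ne hnonneg (Ne.symm hne)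
  have hmonoF : ∀ y z, Y₀ ≤ y → y ≤ z → L₂ z * (z ^ δ)⁻¹ ≤ L₂ y * (y ^ δ)⁻¹ := by
    intro y z hy hyz
    have hy1 : 1 ≤ y := le_trans (le_max_right _ _) hy
    have hz1 : 1 ≤ z := hy1.trans hyz
    have hy0 : (0:ℝ) < y := lt_of_lt_of_le one_pos hy1
    have hz0 : (0:ℝ) < z := lt_of_lt_of_le one_pos hz1
    have ey : (0:ℝ) < y ^ δ := Real.rpow_pos_of_pos hy0 δ
    have ez : (0:ℝ) < z ^ δ := Real.rpow_pos_of_pos hz0 δ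
    rw [hL₂eq y hy1, hL₂eq z hz1, mul_assoc, mul_inv_cancel₀ ez.ne', mul_one,
      mul_assoc, mul_inv_cancel₀ ey.ne', mul_one]
    have hxy := hmem_y y hy1
    have hxz := hmem_y z hz1
    have hmono2 : genFun μ η (1 - 1/y) ≤ genFun μ η (1 - 1/z) :=
      genFun_mono μ hmeasη hxy.1
        (sub_le_sub_left (one_div_le_one_div_of_le hy0 hyz) 1) hxz.2.le
    rw [hggen _ hxy, hggen _ hxz] at hmono2
    linarith
  have hratio := slowly_varying_ratio L₂ hL₂ δ hδ0 Y₀ (le_max_right _ _) hposL₂ hmonoF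
    (fun x => (B x)⁻¹) (fun x => (1 - h x)⁻¹) hu_top huv
  -- assemble everything
  have hL₃pos : ∀ᶠ x in lfil, 0 < L₃ (1/(1-x)) := by
    filter_upwards [hb_pos, hIoo] with x h1 h2
    simp only [mem_Ioo] at h2
    have h1x : (0:ℝ) < 1 - x := by linarith
    have hp : 0 < (1-x) ^ α := Real.rpow_pos_of_pos h1x α
    simp only [hB] at h1
    nlinarith [mul_pos_iff.mp h1]
  have hueY : ∀ᶠ x in lfil, Y₀ ≤ (B x)⁻¹ := hu_top.eventually (eventually_ge_atTop Y₀)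
  have habδ : Tendsto (fun x => ((1 - h x)/B x) ^ δ) lfil (nhds 1) := by
    have hc : ContinuousAt (fun t : ℝ => t ^ δ) 1 :=
      Real.continuousAt_rpow_const 1 δ (Or.inl one_ne_zero)
    have := hc.tendsto.comp hab
    rwa [Real.one_rpow] at this
  have hRform : ∀ᶠ x in lfil,
      (1-x) ^ (δ / (1+ν)) * (L₃ (1/(1-x))) ^ δ
        * L₂ ((1-x) ^ (-(1/(1+ν))) * (L₃ (1/(1-x)))⁻¹)
      = (B x) ^ δ * L₂ ((B x)⁻¹) := by
    filter_upwards [hIoo, hL₃pos] with x hx h3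
    simp only [mem_Ioo] at hx
    have h1x : (0:ℝ) < 1 - x := by linarith
    have e1 : (1-x) ^ (δ / (1+ν)) * (L₃ (1/(1-x))) ^ δ = (B x) ^ δ := by
      simp only [hB]
      rw [Real.mul_rpow (Real.rpow_nonneg h1x.le α) h3.le,
        ← Real.rpow_mul h1x.le α δ]
      congr 2
      rw [hα]; ring
    have e2 : (1-x) ^ (-(1/(1+ν))) * (L₃ (1/(1-x)))⁻¹ = (B x)⁻¹ := by
      simp only [hB]
      rw [mul_inv, Real.rpow_neg h1x.le]
    rw [e1, e2]
  have hRne : ∀ᶠ x in lfil,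
      (1-x) ^ (δ / (1+ν)) * (L₃ (1/(1-x))) ^ δ
        * L₂ ((1-x) ^ (-(1/(1+ν))) * (L₃ (1/(1-x)))⁻¹) ≠ 0 := by
    filter_upwards [hRform, hb_pos, hueY] with x h1 h2 h3
    rw [h1]
    have hBδ : 0 < (B x) ^ δ := Real.rpow_pos_of_pos h2 δ
    have hL2p : 0 < L₂ ((B x)⁻¹) := hposL₂ _ h3
    positivity
  rw [isEquivalent_iff_tendsto_one hRne]
  have hmain : Tendsto
      (fun x => ((1 - h x)/B x) ^ δ * (L₂ ((1 - h x)⁻¹) / L₂ ((B x)⁻¹))) lfil (nhds 1) := by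
    have := habδ.mul hratio
    simpa using this
  apply Tendsto.congr' ?_ hmain
  filter_upwards [hRform, hb_pos, ha_pos, hIoo, hueY] with x h1 h2 h3 hx h5
  simp only [mem_Ioo] at hx
  have hhx := hhval x ⟨hx.1.le, hx.2⟩
  have hgeq := hg (h x) ⟨hhx.1, hhx.2⟩
  simp only [Pi.div_apply]
  rw [h1, hgeq]
  have e6 : 1 - (1 - (1 - h x) ^ δ * L₂ (1/(1 - h x)))
      = (1 - h x) ^ δ * L₂ ((1 - h x)⁻¹) := by rw [one_div]; ring
  rw [e6, Real.div_rpow h3.le h2.le, div_mul_div_comm]
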